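/- Let X be a finite set, k an integer with 2 ≤ k < |X|, and 𝔠 a family of choice functions on k-subsets of X. Let r ≥ 4 be an integer and assume that every (r−1)-averaging function for 𝔠 is a monarchy. Let f = (f_Y) be an r-averaging function for 𝔠. Then: (1) there exists ℓ ∈ {1, …, r} such that f_Y(ā) = a_ℓ for every k-element subset Y of X and every tuple ā ∈ Yʳ with a repeated entry; (2) if in addition f is not a monarchy, then r ≤ k. -/

import Mathlib

/-- `c` is a choice function on `k`-subsets of `X`: it assigns to each
`k`-element subset `Y` of `X` an element of `Y`. -/
def IsChoice {X : Type*} (k : ℕ) (c : Finset X → X) : Prop :=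
  ∀ Y : Finset X, Y.card = k → c Y ∈ Y

/-- The family `C` of choice functions is symmetric. -/
def SymFam {X : Type*} [DecidableEq X] (C : Set (Finset X → X)) : Prop :=
  ∀ π : Equiv.Perm X, ∀ c ∈ C, (fun Y : Finset X => π.symm (c (Y.image π))) ∈ C

/-- The family `C` is full: it contains every choice function on `k`-subsets. -/
def FullFam {X : Type*} (k : ℕ) (C : Set (Finset X → X)) : Prop :=
  ∀ c : Finset X → X, IsChoice k c → c ∈ C

/-- `f` is an `r`-averaging function for `C`. -/
def IsAvg {X : Type*} (k r : ℕ) (C : Set (Finset X → X))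
    (f : Finset X → (Fin r → X) → X) : Prop :=
  (∀ Y : Finset X, Y.card = k → ∀ x : Fin r → X, (∀ i, x i ∈ Y) → ∃ i, f Y x = x i) ∧
  (∀ c : Fin r → Finset X → X, (∀ i, c i ∈ C) →
    (fun Y : Finset X => f Y fun i => c i Y) ∈ C)

/-- The (non-simple) averaging function `f` is a monarchy. -/
def AvgMonarchy {X : Type*} (k r : ℕ) (f : Finset X → (Fin r → X) → X) : Prop :=
  ∃ t : Fin r, ∀ Y : Finset X, Y.card = k → ∀ x : Fin r → X, (∀ i, x i ∈ Y) → f Y x = x t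

/-- `f Y a = a ℓ` whenever `a i = a j`. -/
def PairMon {X : Type*} (k : ℕ) {r : ℕ} (f : Finset X → (Fin r → X) → X)
    (ℓ i j : Fin r) : Prop :=
  ∀ Y : Finset X, Y.card = k → ∀ a : Fin r → X, (∀ t, a t ∈ Y) → a i = a j → f Y a = a ℓ

lemma exists_pairMon {X : Type*} (k : ℕ) {r : ℕ} (hr : 4 ≤ r)
    (C : Set (Finset X → X))
    (hmon : ∀ g : Finset X → (Fin (r - 1) → X) → X,
      IsAvg k (r - 1) C g → AvgMonarchy k (r - 1) g)
    (f : Finset X → (Fin r → X) → X) (hf : IsAvg k r C f)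
    (i j : Fin r) (hij : i ≠ j) :
    ∃ ℓ : Fin r, PairMon k f ℓ i j := by
  classical
  let del : Fin r → Fin (r-1) := fun t =>
    if h : t.val < j.val then ⟨t.val, by have := t.2; have := j.2; omega⟩
    else ⟨t.val - 1, by have := t.2; omega⟩
  let e : Fin r → Fin (r-1) := fun t => if t = j then del i else del t
  let ι : Fin (r-1) → Fin r := fun s =>
    if h : s.val < j.val then ⟨s.val, by have := s.2; omega⟩
    else ⟨s.val + 1, by have := s.2; omega⟩
  have hιdel : ∀ t : Fin r, t ≠ j → ι (del t) = t := by
    intro t ht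
    have htj : t.val ≠ j.val := fun h => ht (Fin.ext h)
    have h2 := t.2
    have hj2 := j.2
    apply Fin.ext
    simp only [del, ι]
    by_cases h1 : t.val < j.val
    · rw [dif_pos h1]
      have : ((⟨t.val, by omega⟩ : Fin (r-1)) : ℕ) < j.val := h1
      rw [dif_pos this]
    · rw [dif_neg h1]
      have : ¬ ((⟨t.val - 1, by omega⟩ : Fin (r-1)) : ℕ) < j.val := by
        simp only []; omega
      rw [dif_neg this]
      simp only []; omega
  have hP1 : ∀ t : Fin r, t ≠ j → ι (e t) = t := by
    intro t ht; simp only [e, if_neg ht]; exact hιdel t ht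
  have hP2 : ι (e j) = i := by
    simp only [e, if_pos rfl]; exact hιdel i hij
  set g : Finset X → (Fin (r-1) → X) → X := fun Y y => f Y (fun t => y (e t)) with hg
  have hgavg : IsAvg k (r-1) C g := by
    constructor
    · intro Y hY y hy
      obtain ⟨t, ht⟩ := hf.1 Y hY (fun t => y (e t)) (fun t => hy _)
      exact ⟨e t, ht⟩
    · intro c hc
      exact hf.2 (fun t => c (e t)) (fun t => hc (e t))
  obtain ⟨s, hs⟩ := hmon g hgavg
  refine ⟨ι s, ?_⟩
  intro Y hY a ha heq
  have key : (fun t => (a ∘ ι) (e t)) = a := by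
    funext t
    by_cases ht : t = j
    · subst ht; simp only [Function.comp, hP2]; exact heq.symm ▸ heq
    · simp only [Function.comp, hP1 t ht]
  have := hs Y hY (a ∘ ι) (fun s => ha (ι s))
  calc f Y a = g Y (a ∘ ι) := by rw [hg]; simp only [key]
    _ = (a ∘ ι) s := this
    _ = a (ι s) := rfl

theorem stmt18 {X : Type*} [Fintype X] [DecidableEq X] (k : ℕ)
    (hk1 : 2 ≤ k) (hk2 : k < Fintype.card X)
    (C : Set (Finset X → X)) (hch : ∀ c ∈ C, IsChoice k c)
    (r : ℕ) (hr : 4 ≤ r)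
    (hmon : ∀ g : Finset X → (Fin (r - 1) → X) → X,
      IsAvg k (r - 1) C g → AvgMonarchy k (r - 1) g)
    (f : Finset X → (Fin r → X) → X) (hf : IsAvg k r C f) :
    (∃ ℓ : Fin r, ∀ Y : Finset X, Y.card = k → ∀ a : Fin r → X, (∀ i, a i ∈ Y) →
        ¬ Function.Injective a → f Y a = a ℓ) ∧
      (¬ AvgMonarchy k r f → r ≤ k) := by
  classical
  obtain ⟨Y0, hY0sub, hY0⟩ : ∃ Y ⊆ (Finset.univ : Finset X), Y.card = k :=
    Finset.exists_subset_card_eq (by simpa using hk2.le)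
  obtain ⟨u, hu, v, hv, huv⟩ := Finset.one_lt_card.mp (by rw [hY0]; omega : 1 < Y0.card)
  have hQ : ∀ i j : Fin r, i ≠ j → ∃ ℓ, PairMon k f ℓ i j :=
    fun i j hij => exists_pairMon k hr C hmon f hf i j hij
  -- the separation constraint
  have key : ∀ (ℓ i j ℓ' i' j' : Fin r), PairMon k f ℓ i j → PairMon k f ℓ' i' j' →
      ∀ S : Finset (Fin r), (i ∈ S ↔ j ∈ S) → (i' ∈ S ↔ j' ∈ S) → (ℓ ∈ S ↔ ℓ' ∈ S) := by
    intro ℓ i j ℓ' i' j' h h' S hS hS'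
    set a : Fin r → X := fun t => if t ∈ S then u else v with ha
    have hmem : ∀ t, a t ∈ Y0 := fun t => by
      by_cases h : t ∈ S <;> simp [a, h, hu, hv]
    have hcong : ∀ x y : Fin r, (x ∈ S ↔ y ∈ S) → a x = a y := by
      intro x y hxy; by_cases hx : x ∈ S
      · simp [a, hx, hxy.mp hx]
      · have hy : y ∉ S := fun hy => hx (hxy.mpr hy)
        simp [a, hx, hy]
    have e3 : a ℓ = a ℓ' :=
      (h Y0 hY0 a hmem (hcong _ _ hS)).symm.trans (h' Y0 hY0 a hmem (hcong _ _ hS'))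
    constructor
    · intro hl; by_contra hl'
      exact huv (by simpa [a, hl, hl'] using e3)
    · intro hl'; by_contra hl
      exact huv (by simpa [a, hl, hl'] using e3.symm)
  -- symmetry and value-transfer facts
  have Pswap : ∀ ℓ i j : Fin r, PairMon k f ℓ i j → PairMon k f ℓ j i :=
    fun ℓ i j h Y hY a ha heq => h Y hY a ha heq.symm
  have Pval : ∀ (i j ℓ : Fin r), PairMon k f ℓ i j → (ℓ = i ∨ ℓ = j) →
      ∀ ℓ'' : Fin r, (ℓ'' = i ∨ ℓ'' = j) → PairMon k f ℓ'' i j := by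
    intro i j ℓ h hℓ ℓ'' hℓ'' Y hY a ha heq
    rw [h Y hY a ha heq]
    have h1 : a ℓ = a i := by
      rcases hℓ with h'|h'
      · rw [h']
      · rw [h']; exact heq.symm
    have h2 : a ℓ'' = a i := by
      rcases hℓ'' with h'|h'
      · rw [h']
      · rw [h']; exact heq.symm
    rw [h1, h2]
  -- existence of fresh elements
  have hex : ∀ s : Finset (Fin r), s.card < r → ∃ x, x ∉ s := by
    intro s hs
    by_contra h
    push_neg at h
    have hsub : (Finset.univ : Finset (Fin r)) ⊆ s := fun x _ => h x
    have := Finset.card_le_card hsub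
    simp at this; omega
  have card3 : ∀ x y z : Fin r, ({x, y, z} : Finset (Fin r)).card < r := by
    intro x y z
    have h2 : ({y, z} : Finset (Fin r)).card ≤ 2 := by
      apply le_trans (Finset.card_insert_le _ _); simp
    have h1 : ({x, y, z} : Finset (Fin r)).card ≤ 3 := by
      apply le_trans (Finset.card_insert_le _ _); omega
    omega
  have card2 : ∀ x y : Fin r, ({x, y} : Finset (Fin r)).card < r := by
    intro x y
    have : ({x, y} : Finset (Fin r)).card ≤ 2 := by
      apply le_trans (Finset.card_insert_le _ _); simp
    omega
  -- Main claim: there is a single global pair-monarch m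
  have hall : ∃ m : Fin r, ∀ i j : Fin r, i ≠ j → PairMon k f m i j := by
    by_cases hcase : ∃ p q : Fin r, p ≠ q ∧ PairMon k f p p q
    · -- Case 2: some pair with internal monarch
      obtain ⟨i0, j0, hij0, hP0⟩ := hcase
      have hP0' : PairMon k f j0 i0 j0 := Pval i0 j0 i0 hP0 (Or.inl rfl) j0 (Or.inr rfl)
      obtain ⟨i1, hi1⟩ := hex {i0, j0} (card2 _ _)
      obtain ⟨j1, hj1⟩ := hex {i0, j0, i1} (card3 _ _ _)
      simp only [Finset.mem_insert, Finset.mem_singleton, not_or] at hi1 hj1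
      obtain ⟨hi1i0, hi1j0⟩ := hi1
      obtain ⟨hj1i0, hj1j0, hj1i1⟩ := hj1
      obtain ⟨m0, hm0⟩ := hQ i1 j1 (fun h => hj1i1 h.symm)
      have hm0mem : m0 = i0 ∨ m0 = j0 := by
        have := key m0 i1 j1 i0 i0 j0 hm0 hP0 {i0, j0}
          (by simp [hi1i0, hi1j0, hj1i0, hj1j0]) (by simp)
        simpa using this.mpr (by simp)
      -- the general argument, stated symmetrically in (m, m')
      have main : ∀ m m' : Fin r, m ≠ m' → PairMon k f m m m' → PairMon k f m' m m' →
          PairMon k f m i1 j1 → i1 ≠ m → i1 ≠ m' → j1 ≠ m → j1 ≠ m' →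
          ∀ i j : Fin r, i ≠ j → PairMon k f m i j := by
        intro m m' hmm' hPm hPm' hPq0 hi1m hi1m' hj1m hj1m'
        have hb : ∀ i j : Fin r, i ≠ j → i ≠ m → i ≠ m' → j ≠ m → j ≠ m' →
            PairMon k f m i j := by
          intro i j hij him him' hjm hjm'
          obtain ⟨ℓ, hℓ⟩ := hQ i j hij
          have h1 : ℓ = m ∨ ℓ = m' := by
            have := key ℓ i j m m m' hℓ hPm {m, m'}
              (by simp [him, him', hjm, hjm']) (by simp)
            simpa using this.mpr (by simp)
          have h2 : ℓ = m := by
            rcases h1 with h1 | h1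
            · exact h1
            · exfalso
              have him2 : i ≠ ℓ := h1 ▸ him'
              have hjm2 : j ≠ ℓ := h1 ▸ hjm'
              have hi1m2 : i1 ≠ ℓ := h1 ▸ hi1m'
              have hj1m2 : j1 ≠ ℓ := h1 ▸ hj1m'
              have := key ℓ i j m i1 j1 hℓ hPq0 {ℓ}
                (by simp [him2, hjm2]) (by simp [hi1m2, hj1m2])
              have hmℓ : m = ℓ := by simpa using this.mp (by simp)
              exact hmm' (hmℓ.trans h1)
          exact h2 ▸ hℓ
        have main2 : ∀ z x : Fin r, (z = m ∨ z = m') → x ≠ m → x ≠ m' → z ≠ x →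
            PairMon k f m z x := by
          intro z x hz hxm hxm' hzx
          obtain ⟨ℓ, hℓ⟩ := hQ z x hzx
          obtain ⟨y, hy⟩ := hex {m, m', x} (card3 _ _ _)
          simp only [Finset.mem_insert, Finset.mem_singleton, not_or] at hy
          obtain ⟨hym, hym', hyx⟩ := hy
          have hPxy : PairMon k f m x y :=
            hb x y (fun h => hyx h.symm) hxm hxm' (fun h => hym (h.symm ▸ rfl)) (fun h => hym' (h.symm ▸ rfl))
          have hS1 : ℓ = m ∨ ℓ = m' ∨ ℓ = x := by
            have := key ℓ z x m m m' hℓ hPm {m, m', x}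
              (by rcases hz with h|h <;> simp [h]) (by simp)
            simpa using this.mpr (by simp)
          rcases hz with hzm | hzm'
          · -- z = m
            have hS3 : ℓ = m ∨ ℓ = x ∨ ℓ = y := by
              have := key ℓ z x m x y hℓ hPxy {m, x, y}
                (by simp [hzm]) (by simp)
              simpa using this.mpr (by simp)
            have hmx2 : ℓ = m ∨ ℓ = x := by
              rcases hS1 with h|h|h
              · exact Or.inl h
              · exfalso
                rcases hS3 with h'|h'|h'
                · exact hmm' (h'.symm.trans h)
                · exact hxm' (h'.symm.trans h)
                · exact hym' (h'.symm.trans h)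
              · exact Or.inr h
            rcases hmx2 with h | h
            · exact h ▸ hℓ
            · -- ℓ = x : then P x z x holds, transfer to m = z
              intro Y hY a ha heq
              rw [hℓ Y hY a ha heq, h, ← heq, hzm]
          · -- z = m'
            have hℓm : ℓ = m := by
              have hmz : m ≠ z := hzm' ▸ hmm'
              have := key ℓ z x m x y hℓ hPxy {m}
                (by simp [Ne.symm hmz, hxm]) (by simp [hxm, hym])
              simpa using this.mpr (by simp)
            exact hℓm ▸ hℓ
        intro i j hij
        by_cases hi : i = m ∨ i = m'
        · by_cases hj : j = m ∨ j = m'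
          · rcases hi with h|h <;> rcases hj with h'|h'
            · exact absurd (h.trans h'.symm) hij
            · rw [h, h']; exact hPm
            · rw [h, h']; exact Pswap _ _ _ hPm
            · exact absurd (h.trans h'.symm) hij
          · push_neg at hj
            exact main2 i j hi hj.1 hj.2 (by rintro rfl; exact hj.elim (fun h1 h2 => (hi.elim (fun h => h1 h) (fun h => h2 h))))
        · push_neg at hi
          by_cases hj : j = m ∨ j = m'
          · exact Pswap _ _ _ (main2 j i hj hi.1 hi.2 (Ne.symm hij))
          · push_neg at hj
            exact hb i j hij hi.1 hi.2 hj.1 hj.2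
      rcases hm0mem with h | h
      · exact ⟨i0, main i0 j0 hij0 hP0 hP0' (h ▸ hm0) hi1i0 hi1j0 hj1i0 hj1j0⟩
      · exact ⟨j0, main j0 i0 (Ne.symm hij0) (Pswap _ _ _ hP0') (Pswap _ _ _ hP0) (h ▸ hm0)
          hi1j0 hi1i0 hj1j0 hj1i0⟩
    · -- Case 1: no internal monarch anywhere — contradiction
      exfalso
      push_neg at hcase
      have hcase' : ∀ p q : Fin r, p ≠ q → ¬ PairMon k f p p q := fun p q h => hcase p q h
      have h0r : (0 : ℕ) < r := by omega
      have h1r : (1 : ℕ) < r := by omega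
      set q1 : Fin r := ⟨0, h0r⟩ with hq1def
      set q2 : Fin r := ⟨1, h1r⟩ with hq2def
      have hq12 : q1 ≠ q2 := by simp [hq1def, hq2def, Fin.ext_iff]
      obtain ⟨m, hm⟩ := hQ q1 q2 hq12
      have hmq1 : m ≠ q1 := fun h => hcase' q1 q2 hq12 (h ▸ hm)
      have hmq2 : m ≠ q2 := fun h =>
        hcase' q1 q2 hq12 (Pval q1 q2 m hm (Or.inr h) q1 (Or.inl rfl))
      obtain ⟨x, hx⟩ := hex {q1, q2, m} (card3 _ _ _)
      simp only [Finset.mem_insert, Finset.mem_singleton, not_or] at hx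
      obtain ⟨hxq1, hxq2, hxm⟩ := hx
      have hmx : m ≠ x := fun h => hxm h.symm
      obtain ⟨ℓp, hℓp⟩ := hQ m x hmx
      have hmem : ℓp = m ∨ ℓp = x := by
        have := key ℓp m x m q1 q2 hℓp hm {m, x}
          (by simp) (by simp [Ne.symm hmq1, Ne.symm hmq2, Ne.symm hxq1, Ne.symm hxq2])
        simpa using this.mpr (by simp)
      exact hcase' m x hmx (Pval m x ℓp hℓp hmem m (Or.inl rfl))
  obtain ⟨m, hmall⟩ := hall
  constructor
  · refine ⟨m, fun Y hY a ha hninj => ?_⟩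
    obtain ⟨x, y, hxy, hne⟩ := Function.not_injective_iff.mp hninj
    exact hmall x y hne Y hY a ha hxy
  · intro hnm
    by_contra hrk
    push_neg at hrk
    apply hnm
    refine ⟨m, fun Y hY a ha => ?_⟩
    have hninj : ¬ Function.Injective a := by
      intro hinj
      have hle : (Finset.univ : Finset (Fin r)).card ≤ Y.card :=
        Finset.card_le_card_of_injOn a (fun t _ => ha t) (hinj.injOn)
      simp [hY] at hle
      omega
    obtain ⟨x, y, hxy, hne⟩ := Function.not_injective_iff.mp hninj
    exact hmall x y hne Y hY a ha hxy
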